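/- For any fractional packing {r_T} of bad triangles in a complete signed graph G (where a bad triangle has two positive edges and one negative edge, and the packing satisfies sum of r_T over triangles containing any edge e is at most 1), the sum of all r_T is at most the number of edges in disagreement with any clustering of G, in particular the optimal one. -/
import Mathlib


attribute [local instance] Classical.propDecidable

/-- A triangle `{u,v,w}` is *bad* if two of its edges are positive and one is negative. -/
def IsBadTriangle {V : Type*} [DecidableEq V] (pos : V → V → Bool) (t : Finset V) : Prop :=
  ∃ u v w : V, u ≠ v ∧ u ≠ w ∧ v ≠ w ∧ t = {u, v, w} ∧
    pos u v = true ∧ pos u w = true ∧ pos v w = false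

/-- The edge `(u,v)` is in disagreement with the clustering `c` : a positive edge disagrees
if its endpoints lie in different clusters, a negative edge disagrees if they lie in the same. -/
def Disagree {V : Type*} (pos : V → V → Bool) (c : V → ℕ) (u v : V) : Prop :=
  (pos u v = true ∧ c u ≠ c v) ∨ (pos u v = false ∧ c u = c v)

/-- Number of edges (unordered pairs) in disagreement with the clustering `c`. -/
noncomputable def disagreements {V : Type*} [Fintype V] [LinearOrder V]
    (pos : V → V → Bool) (c : V → ℕ) : ℕ :=
  (Finset.univ.filter (fun p : V × V => p.1 < p.2 ∧ Disagree pos c p.1 p.2)).card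

/-- Every bad triangle contains an ordered disagreeing pair. -/
lemma bad_triangle_has_disagreement {V : Type*} [Fintype V] [LinearOrder V]
    (pos : V → V → Bool) (hsym : ∀ u v, pos u v = pos v u) (c : V → ℕ)
    {t : Finset V} (ht : IsBadTriangle pos t) :
    ∃ p : V × V, p.1 < p.2 ∧ p.1 ∈ t ∧ p.2 ∈ t ∧ Disagree pos c p.1 p.2 := by

  obtain ⟨u, v, w, huv, huw, hvw, rfl, h1, h2, h3⟩ := ht
  have hu : u ∈ ({u, v, w} : Finset V) := by simp
  have hv : v ∈ ({u, v, w} : Finset V) := by simp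
  have hw : w ∈ ({u, v, w} : Finset V) := by simp
  have hdsym : ∀ a b : V, Disagree pos c a b → Disagree pos c b a := by
    intro a b hab
    rcases hab with ⟨hp, hc⟩ | ⟨hp, hc⟩
    · exact Or.inl ⟨(hsym b a).trans hp, hc.symm⟩
    · exact Or.inr ⟨(hsym b a).trans hp, hc.symm⟩
  have key : (∃ a b : V, a ∈ ({u,v,w} : Finset V) ∧ b ∈ ({u,v,w} : Finset V) ∧ a ≠ b ∧
      Disagree pos c a b) := by
    by_cases e1 : c u = c v
    · by_cases e2 : c u = c w
      · exact ⟨v, w, hv, hw, hvw, Or.inr ⟨h3, e1.symm.trans e2⟩⟩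
      · exact ⟨u, w, hu, hw, huw, Or.inl ⟨h2, e2⟩⟩
    · exact ⟨u, v, hu, hv, huv, Or.inl ⟨h1, e1⟩⟩
  obtain ⟨a, b, ha, hb, hab, hd⟩ := key
  rcases lt_or_gt_of_ne hab with hlt | hgt
  · exact ⟨(a, b), hlt, ha, hb, hd⟩
  · exact ⟨(b, a), hgt, hb, ha, hdsym a b hd⟩

/-- For any fractional packing `{r_T}` of bad triangles, `∑ r_T` is at most the number of
disagreements of any clustering (in particular of the optimal one). -/
theorem fractional_packing_le_disagreements {V : Type*} [Fintype V] [LinearOrder V]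
    (pos : V → V → Bool) (hsym : ∀ u v, pos u v = pos v u)
    (r : Finset V → ℝ)
    (hr0 : ∀ t, 0 ≤ r t) (hr1 : ∀ t, r t ≤ 1)
    (hsupp : ∀ t, ¬ IsBadTriangle pos t → r t = 0)
    (hpack : ∀ u v : V, u ≠ v →
      ∑ t ∈ Finset.univ.filter
        (fun t : Finset V => IsBadTriangle pos t ∧ u ∈ t ∧ v ∈ t), r t ≤ 1)
    (c : V → ℕ) :
    ∑ t ∈ Finset.univ.filter (fun t : Finset V => IsBadTriangle pos t), r t
      ≤ (disagreements pos c : ℝ) := by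

  rcases isEmpty_or_nonempty V with hV | hV
  · have : (Finset.univ.filter (fun t : Finset V => IsBadTriangle pos t)) = ∅ := by
      apply Finset.filter_false_of_mem
      rintro t - ⟨u, _⟩
      exact (hV.false u).elim
    rw [this]
    simp [Nat.cast_nonneg]
  · have : Inhabited V := Classical.inhabited_of_nonempty hV
    set S := Finset.univ.filter (fun t : Finset V => IsBadTriangle pos t) with hS
    set D := Finset.univ.filter
      (fun p : V × V => p.1 < p.2 ∧ Disagree pos c p.1 p.2) with hD
    set f : Finset V → V × V := fun t =>
      if h : IsBadTriangle pos t then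
        (bad_triangle_has_disagreement pos hsym c h).choose
      else default with hf
    have hfspec : ∀ t : Finset V, IsBadTriangle pos t →
        (f t).1 < (f t).2 ∧ (f t).1 ∈ t ∧ (f t).2 ∈ t ∧
          Disagree pos c (f t).1 (f t).2 := by
      intro t h
      simp only [hf, dif_pos h]
      exact (bad_triangle_has_disagreement pos hsym c h).choose_spec
    have hmaps : ∀ t ∈ S, f t ∈ D := by
      intro t ht
      have hbad : IsBadTriangle pos t := by simpa [hS] using ht
      obtain ⟨h1, _, _, h4⟩ := hfspec t hbad
      simp [hD, h1, h4]
    rw [show ∑ t ∈ S, r t = ∑ e ∈ D, ∑ t ∈ S.filter (fun t => f t = e), r t from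
      (Finset.sum_fiberwise_of_maps_to hmaps r).symm]
    have hbound : ∀ e ∈ D, ∑ t ∈ S.filter (fun t => f t = e), r t ≤ 1 := by
      intro e he
      have he' : e.1 < e.2 := by
        simp only [hD, Finset.mem_filter] at he
        exact he.2.1
      refine le_trans ?_ (hpack e.1 e.2 he'.ne)
      apply Finset.sum_le_sum_of_subset_of_nonneg
      · intro t ht
        simp only [Finset.mem_filter, hS] at ht ⊢
        obtain ⟨⟨-, hbad⟩, hfe⟩ := ht
        obtain ⟨-, m1, m2, -⟩ := hfspec t hbad
        rw [hfe] at m1 m2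
        exact ⟨Finset.mem_univ t, hbad, m1, m2⟩
      · intro t _ _
        exact hr0 t
    calc ∑ e ∈ D, ∑ t ∈ S.filter (fun t => f t = e), r t
        ≤ ∑ e ∈ D, (1 : ℝ) := Finset.sum_le_sum hbound
      _ = (D.card : ℝ) := by simp
      _ = (disagreements pos c : ℝ) := by rw [disagreements, hD]
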